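/- Let T be a densely defined symmetric operator in a Hilbert space H with inner product (·,·), let g₁,…,gₙ ∈ H, and set D₀ := {u ∈ D(T) : (u,gⱼ) = 0 for j = 1,…,n}. If x ∈ H is such that the linear functional u ↦ (Tu,x) is bounded on D₀ (i.e. there exists C ≥ 0 with |(Tu,x)| ≤ C‖u‖ for all u ∈ D₀), then x ∈ D(T*). -/

import Mathlib

noncomputable section
open MeasureTheory Set Filter Topology

namespace PaperEss

variable {H : Type*} [NormedAddCommGroup H] [InnerProductSpace ℂ H]

/-- The operator `T - λ` with the same domain as `T`. -/
def shift (T : H →ₗ.[ℂ] H) (l : ℂ) : H →ₗ.[ℂ] H :=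
  ⟨T.domain, T.toFun - l • T.domain.subtype⟩

/-- A partially defined operator is Fredholm if its range is closed and both the kernel
and the orthogonal complement of the range are finite-dimensional. -/
def IsFredholm (T : H →ₗ.[ℂ] H) : Prop :=
  IsClosed (LinearMap.range T.toFun : Set H) ∧
    FiniteDimensional ℂ (LinearMap.ker T.toFun) ∧
    FiniteDimensional ℂ ((LinearMap.range T.toFun)ᗮ)

/-- The essential spectrum: the set of `λ` such that `T - λ` is not Fredholm. -/
def essSpec (T : H →ₗ.[ℂ] H) : Set ℂ := {l | ¬IsFredholm (shift T l)}

/-- A partially defined operator is symmetric. -/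
def IsSymm (T : H →ₗ.[ℂ] H) : Prop :=
  ∀ u v : T.domain, (inner ℂ (T u) (v : H) : ℂ) = inner ℂ (u : H) (T v)

/-- `λ` is an eigenvalue of `T`. -/
def IsEigen (T : H →ₗ.[ℂ] H) (l : ℂ) : Prop :=
  ∃ u : T.domain, (u : H) ≠ 0 ∧ T u = l • (u : H)

/-- `λ` belongs to the resolvent set of `T`: `T - λ` is a bijection onto `H`
with bounded inverse. -/
def InResolvent (T : H →ₗ.[ℂ] H) (l : ℂ) : Prop :=
  Function.Injective (shift T l).toFun ∧ LinearMap.range (shift T l).toFun = ⊤ ∧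
    ∃ C : ℝ, ∀ u : (shift T l).domain, ‖(u : H)‖ ≤ C * ‖shift T l u‖

variable [CompleteSpace H] in
/-- `T` has finite deficiency indices: `dim ker (T̄* ∓ i) < ∞`. -/
def FiniteDeficiency (T : H →ₗ.[ℂ] H) : Prop :=
  FiniteDimensional ℂ (LinearMap.ker (shift T.closure.adjoint Complex.I).toFun) ∧
    FiniteDimensional ℂ (LinearMap.ker (shift T.closure.adjoint (-Complex.I)).toFun)

/-- Let `T` be a densely defined symmetric operator,
`g₁, …, gₙ ∈ H` and `D₀ = {u ∈ D(T) : (u, gⱼ) = 0 for all j}`. If the functional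
`u ↦ (T u, x)` is bounded on `D₀`, then `x ∈ D(T*)`. -/
theorem mem_adjoint_domain_of_bounded_on_finite_codim
    {H : Type*} [NormedAddCommGroup H] [InnerProductSpace ℂ H] [CompleteSpace H]
    (T : H →ₗ.[ℂ] H) (hdense : Dense (T.domain : Set H)) (hsymm : IsSymm T)
    (n : ℕ) (g : Fin n → H) (x : H) (C : ℝ) (hC : 0 ≤ C)
    (hb : ∀ u : T.domain, (∀ j : Fin n, (inner ℂ (u : H) (g j) : ℂ) = 0) →
      ‖(inner ℂ (T u) x : ℂ)‖ ≤ C * ‖(u : H)‖) :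
    x ∈ T.adjoint.domain := by
  rw [LinearPMap.mem_adjoint_domain_iff]
  -- the functional `u ↦ ⟪x, T u⟫`
  set φ : T.domain →ₗ[ℂ] ℂ := (innerₛₗ ℂ x).comp T.toFun with hφ
  -- the continuous map `u ↦ (⟪gⱼ, u⟫)ⱼ`
  set Gc : T.domain →L[ℂ] (Fin n → ℂ) :=
    ContinuousLinearMap.pi (fun j => (innerSL ℂ (g j)).comp (Submodule.subtypeL T.domain))
    with hGcdef
  set G : T.domain →ₗ[ℂ] (Fin n → ℂ) := Gc.toLinearMap with hGdef
  set K : Submodule ℂ T.domain := LinearMap.ker G with hKdef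
  obtain ⟨F', hcompl⟩ := Submodule.exists_isCompl K
  haveI hFfin : FiniteDimensional ℂ F' :=
    Module.Finite.equiv ((G.quotKerEquivRange).symm.trans
      (Submodule.quotientEquivOfIsCompl K F' hcompl))
  -- projections onto `K` and `F'`
  set P : T.domain →ₗ[ℂ] K := K.projectionOnto F' hcompl with hPdef
  set Q : T.domain →ₗ[ℂ] F' := F'.projectionOnto K hcompl.symm with hQdef
  have hPQ : ∀ u : T.domain, ((P u : T.domain)) + (Q u : T.domain) = u := fun u =>
    Submodule.projection_add_projection_eq_self hcompl u
  -- `G` is injective on `F'`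
  set GF : F' →ₗ[ℂ] (Fin n → ℂ) := G.comp F'.subtype with hGF
  have hinj : Function.Injective GF := by
    rw [← LinearMap.ker_eq_bot]
    rw [LinearMap.ker_eq_bot']
    intro v hv
    have hvK : (v : T.domain) ∈ K := hv
    have : (v : T.domain) ∈ K ⊓ F' := ⟨hvK, v.2⟩
    rw [hcompl.inf_eq_bot] at this
    exact Subtype.ext this
  set e : F' ≃ₗ[ℂ] LinearMap.range GF := LinearEquiv.ofInjective GF hinj with hedef
  have hGP : ∀ u : T.domain, G ((P u : T.domain)) = 0 := fun u => (P u).2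
  have hmem : ∀ u : T.domain, G u ∈ LinearMap.range GF := by
    intro u
    refine ⟨Q u, ?_⟩
    have : G u = G ((P u : T.domain)) + G ((Q u : T.domain)) := by
      rw [← map_add, hPQ u]
    rw [this, hGP u, zero_add]
    rfl
  -- `Q` factors continuously through `G`
  have hQcont : Continuous Q := by
    have hQeq : ∀ u : T.domain, Q u = e.symm ⟨G u, hmem u⟩ := by
      intro u
      apply e.injective
      rw [e.apply_symm_apply]
      apply Subtype.ext
      have : (e (Q u) : Fin n → ℂ) = GF (Q u) := rfl
      rw [this]
      show GF (Q u) = G u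
      have h2 : G u = G ((P u : T.domain)) + G ((Q u : T.domain)) := by
        rw [← map_add, hPQ u]
      rw [h2, hGP u, zero_add]; rfl
    have hc1 : Continuous fun u : T.domain => (⟨G u, hmem u⟩ : LinearMap.range GF) :=
      Continuous.subtype_mk Gc.continuous _
    have hc2 : Continuous (e.symm : LinearMap.range GF →ₗ[ℂ] F') :=
      LinearMap.continuous_of_finiteDimensional _
    have h3 : (Q : T.domain → F') = fun u => e.symm ⟨G u, hmem u⟩ := funext hQeq
    rw [show (Q : T.domain → F') = fun u => e.symm ⟨G u, hmem u⟩ from funext hQeq]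
    exact hc2.comp hc1
  -- hence `u ↦ ↑(P u)` is continuous
  have hPcont : Continuous fun u : T.domain => ((P u : T.domain)) := by
    have : (fun u : T.domain => ((P u : T.domain))) =
        fun u : T.domain => u - ((Q u : T.domain)) := by
      funext u
      rw [eq_sub_iff_add_eq, hPQ u]
    rw [this]
    exact continuous_id.sub (continuous_subtype_val.comp hQcont)
  -- the continuous linear map `u ↦ ↑(P u)`
  set Ac : T.domain →L[ℂ] T.domain := ⟨K.subtype.comp P, hPcont⟩ with hAc
  -- the part of `φ` along `K` is bounded
  set ψ : T.domain →ₗ[ℂ] ℂ := φ.comp (K.subtype.comp P) with hψ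
  have hψcont : Continuous ψ := by
    apply AddMonoidHomClass.continuous_of_bound ψ (C * ‖Ac‖)
    intro u
    set w : T.domain := (P u : T.domain) with hw
    have hwval : ψ u = inner ℂ x (T w) := rfl
    have hworth : ∀ j : Fin n, (inner ℂ (w : H) (g j) : ℂ) = 0 := by
      intro j
      rw [← inner_conj_symm]
      have h0 : G w = 0 := hGP u
      have : (inner ℂ (g j) (w : H) : ℂ) = 0 := congrFun h0 j
      rw [this, map_zero]
    have hb' : ‖(inner ℂ (T w) x : ℂ)‖ ≤ C * ‖(w : H)‖ := hb w hworth
    have h1 : ‖ψ u‖ ≤ C * ‖(w : H)‖ := by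
      rw [hwval, ← norm_inner_symm (𝕜 := ℂ)]
      exact hb'
    have h2 : ‖(w : H)‖ = ‖Ac u‖ := rfl
    calc ‖ψ u‖ ≤ C * ‖Ac u‖ := by rw [← h2]; exact h1
      _ ≤ C * (‖Ac‖ * ‖u‖) := by
          exact mul_le_mul_of_nonneg_left (ContinuousLinearMap.le_opNorm Ac u) hC
      _ = C * ‖Ac‖ * ‖u‖ := by ring
  -- the part of `φ` along `F'` is continuous (finite dimensions)
  have hχcont : Continuous ((φ.comp F'.subtype).comp Q) := by
    have h1 : Continuous (φ.comp F'.subtype) := LinearMap.continuous_of_finiteDimensional _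
    exact h1.comp hQcont
  -- `φ = ψ + (φ∘F'.subtype)∘Q`
  have hsplit : (φ : T.domain → ℂ) =
      fun u => ψ u + (φ.comp F'.subtype) (Q u) := by
    funext u
    have : ψ u + (φ.comp F'.subtype) (Q u) = φ ((P u : T.domain)) + φ ((Q u : T.domain)) := rfl
    rw [this, ← map_add, hPQ u]
  have : Continuous (φ : T.domain → ℂ) := by
    rw [hsplit]
    exact hψcont.add hχcont
  exact this

end PaperEss
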